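/- For every matrix G ∈ ℝ^{3×3} one has lim_{t→0} dist(Id + tG, SO(3))/|t| = |sym G|, where dist denotes the distance induced by the Frobenius norm; that is, to first order the distance of Id + tG from the rotation group is the Frobenius norm of the symmetric part of tG. -/

import Mathlib

/- Frobenius norm instances on matrices -/
attribute [local instance] Matrix.frobeniusNormedAddCommGroup Matrix.frobeniusNormedSpace

open Matrix

/-- The rotation group SO(3). -/
def SO3 : Set (Matrix (Fin 3) (Fin 3) ℝ) :=
  {R | Rᵀ * R = 1 ∧ R.det = 1}

/-- The symmetric part of a matrix. -/
noncomputable def symPart (F : Matrix (Fin 3) (Fin 3) ℝ) : Matrix (Fin 3) (Fin 3) ℝ :=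
  (1 / 2 : ℝ) • (F + Fᵀ)

namespace SO3Aux

abbrev M3 := Matrix (Fin 3) (Fin 3) ℝ

noncomputable def skewPart (F : M3) : M3 := (1 / 2 : ℝ) • (F - Fᵀ)

noncomputable def ip (A B : M3) : ℝ := Matrix.trace (Aᵀ * B)

theorem ip_eq_sum (A B : M3) : ip A B = ∑ i, ∑ j, A i j * B i j := by
  simp only [ip, Matrix.trace, Matrix.mul_apply, Matrix.diag, Matrix.transpose_apply]
  rw [Finset.sum_comm]

theorem norm_sq_eq_ip (A : M3) : ‖A‖ ^ 2 = ip A A := by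
  rw [Matrix.frobenius_norm_def]
  rw [← Real.rpow_natCast _ 2, ← Real.rpow_mul (by positivity)]
  norm_num
  rw [ip_eq_sum]
  simp [Real.norm_eq_abs, sq_abs, sq]

theorem ip_comm (A B : M3) : ip A B = ip B A := by
  unfold ip
  conv_lhs => rw [← Matrix.trace_transpose]
  simp [Matrix.transpose_mul]

theorem ip_add_left (A B C : M3) : ip (A + B) C = ip A C + ip B C := by
  simp [ip, Matrix.transpose_add, Matrix.add_mul]

theorem ip_add_right (A B C : M3) : ip A (B + C) = ip A B + ip A C := by
  simp [ip, Matrix.mul_add]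

theorem ip_smul_right (c : ℝ) (A B : M3) : ip A (c • B) = c * ip A B := by
  simp [ip, Matrix.mul_smul]

theorem norm_add_sq (A B : M3) : ‖A + B‖ ^ 2 = ‖A‖ ^ 2 + 2 * ip A B + ‖B‖ ^ 2 := by
  rw [norm_sq_eq_ip, norm_sq_eq_ip, norm_sq_eq_ip, ip_add_left, ip_add_right, ip_add_right,
    ip_comm B A]
  ring

theorem ip_sq_le (A B : M3) : (ip A B) ^ 2 ≤ ip A A * ip B B := by
  rw [ip_eq_sum, ip_eq_sum, ip_eq_sum]
  rw [← Finset.sum_product', ← Finset.sum_product', ← Finset.sum_product']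
  have := Finset.sum_mul_sq_le_sq_mul_sq (Finset.univ ×ˢ Finset.univ)
    (fun p : Fin 3 × Fin 3 => A p.1 p.2) (fun p : Fin 3 × Fin 3 => B p.1 p.2)
  simpa [sq] using this

theorem neg_norm_le_ip (A B : M3) : -(‖A‖ * ‖B‖) ≤ ip A B := by
  have h := ip_sq_le A B
  rw [← norm_sq_eq_ip, ← norm_sq_eq_ip] at h
  nlinarith [norm_nonneg A, norm_nonneg B, mul_nonneg (norm_nonneg A) (norm_nonneg B), sq_nonneg (ip A B + ‖A‖ * ‖B‖), sq_nonneg (ip A B - ‖A‖ * ‖B‖)]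

theorem sym_add_skew (X : M3) : symPart X + skewPart X = X := by
  unfold symPart skewPart
  module

theorem symPart_transpose (X : M3) : (symPart X)ᵀ = symPart X := by
  unfold symPart
  simp [Matrix.transpose_smul, Matrix.transpose_add, add_comm]

theorem skewPart_transpose (X : M3) : (skewPart X)ᵀ = -skewPart X := by
  unfold skewPart
  simp [Matrix.transpose_smul, Matrix.transpose_sub]
  module

theorem ip_sym_skew (X Y : M3) (hX : Xᵀ = X) (hY : Yᵀ = -Y) : ip X Y = 0 := by
  have h1 : ip X Y = ip Y X := ip_comm X Y
  unfold ip at h1 ⊢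
  rw [hX] at h1 ⊢
  rw [hY] at h1
  rw [Matrix.neg_mul, Matrix.trace_neg, Matrix.trace_mul_comm] at h1
  rw [Matrix.trace_mul_comm]
  linarith

theorem norm_sq_decomp (X : M3) : ‖X‖ ^ 2 = ‖symPart X‖ ^ 2 + ‖skewPart X‖ ^ 2 := by
  conv_lhs => rw [← sym_add_skew X]
  rw [norm_add_sq, ip_sym_skew _ _ (symPart_transpose X) (skewPart_transpose X)]
  ring

theorem symPart_add (X Y : M3) : symPart (X + Y) = symPart X + symPart Y := by
  unfold symPart; simp [Matrix.transpose_add]; module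

theorem symPart_smul (c : ℝ) (X : M3) : symPart (c • X) = c • symPart X := by
  unfold symPart; simp [Matrix.transpose_smul]; module

theorem skewPart_add (X Y : M3) : skewPart (X + Y) = skewPart X + skewPart Y := by
  unfold skewPart; simp [Matrix.transpose_add]; module

theorem skewPart_smul (c : ℝ) (X : M3) : skewPart (c • X) = c • skewPart X := by
  unfold skewPart; simp [Matrix.transpose_smul]; module

theorem trace_symPart (M : M3) : Matrix.trace (symPart M) = Matrix.trace M := by
  unfold symPart
  simp [Matrix.trace_smul, Matrix.trace_add, Matrix.trace_transpose]
  ring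

theorem ip_one_right (S : M3) : ip S 1 = Matrix.trace S := by
  simp [ip]

theorem ip_one_one : ip (1 : M3) 1 = 3 := by
  simp [ip, Matrix.trace_one]

theorem key (G : M3) (t : ℝ) (R : M3) (hR : Rᵀ * R = 1)
    (hsmall : ‖t • symPart G‖ ≤ 1 / 8) :
    ‖t • symPart G‖ ^ 2 - 8 * ‖t • symPart G‖ * ‖t • skewPart G‖ ^ 2
      ≤ ‖(1 + t • G) - R‖ ^ 2 := by
  set A := t • symPart G with hA
  set W := t • skewPart G with hW
  set M := (1 : M3) - R with hMdef
  set S := symPart M with hSdef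
  set K := skewPart M with hKdef
  have h1 : (1 + t • G) - R = t • G + M := by rw [hMdef]; abel
  have hsymF : symPart ((1 + t • G) - R) = A + S := by
    rw [h1, symPart_add, symPart_smul]
  have hskewF : skewPart ((1 + t • G) - R) = W + K := by
    rw [h1, skewPart_add, skewPart_smul]
  have hMtM : Mᵀ * M = M + Mᵀ := by
    rw [hMdef]
    simp [Matrix.sub_mul, Matrix.mul_sub, Matrix.transpose_sub, Matrix.transpose_one, hR]
    abel
  have hS : S = (1 / 2 : ℝ) • (Mᵀ * M) := by rw [hMtM, hSdef]; rfl
  have hnormM : ‖M‖ ^ 2 = 2 * Matrix.trace M := by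
    rw [norm_sq_eq_ip]
    unfold ip
    rw [hMtM, Matrix.trace_add, Matrix.trace_transpose]
    ring
  have htrM : 0 ≤ Matrix.trace M := by nlinarith [sq_nonneg ‖M‖]
  have hSle : ‖S‖ ≤ Matrix.trace M := by
    rw [hS, norm_smul]
    have h2 : ‖Mᵀ * M‖ ≤ ‖M‖ * ‖M‖ := by
      calc ‖Mᵀ * M‖ ≤ ‖Mᵀ‖ * ‖M‖ := Matrix.frobenius_norm_mul _ _
      _ = ‖M‖ * ‖M‖ := by rw [Matrix.frobenius_norm_transpose]
    have : ‖M‖ * ‖M‖ = 2 * Matrix.trace M := by nlinarith [hnormM]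
    simp only [Real.norm_eq_abs]
    rw [abs_of_pos (by norm_num : (0:ℝ) < 1/2)]
    nlinarith
  have hS3 : (Matrix.trace M) ^ 2 ≤ 3 * ‖S‖ ^ 2 := by
    have h3 := ip_sq_le S 1
    rw [ip_one_right, ip_one_one, ← norm_sq_eq_ip, trace_symPart] at h3
    linarith
  have hK2 : ‖K‖ ^ 2 = 2 * Matrix.trace M - ‖S‖ ^ 2 := by
    have h4 := norm_sq_decomp M
    rw [← hSdef, ← hKdef] at h4
    linarith
  have hAS : -(‖A‖ * (2 * Matrix.trace M)) ≤ 2 * ip A S := by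
    have e : 2 * ip A S = ip (M * A) M := by
      rw [hS, ip_smul_right]
      have e2 : ip A (Mᵀ * M) = ip (M * A) M := by
        unfold ip
        rw [Matrix.transpose_mul, ← Matrix.mul_assoc]
      rw [e2]; ring
    rw [e]
    have h5 := neg_norm_le_ip (M * A) M
    have h6 : ‖M * A‖ ≤ ‖M‖ * ‖A‖ := Matrix.frobenius_norm_mul _ _
    nlinarith [norm_nonneg M, norm_nonneg A, norm_nonneg (M * A)]
  have hWK : -(‖W‖ * ‖K‖) ≤ ip W K := neg_norm_le_ip W K
  rw [norm_sq_decomp ((1 + t • G) - R), hsymF, hskewF, norm_add_sq, norm_add_sq]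
  have ha0 : (0:ℝ) ≤ ‖A‖ := norm_nonneg A
  have hw0 : (0:ℝ) ≤ ‖W‖ := norm_nonneg W
  have hp0 : (0:ℝ) ≤ ‖S‖ := norm_nonneg S
  have hk0 : (0:ℝ) ≤ ‖K‖ := norm_nonneg K
  rcases le_or_gt 1 (Matrix.trace M) with hs | hs
  · nlinarith [sq_nonneg (‖W‖ - ‖K‖), mul_nonneg (mul_nonneg ha0 hw0) hw0,
      mul_nonneg htrM htrM]
  · rcases le_or_gt (2 * ‖W‖) ‖K‖ with hk | hk
    · nlinarith [sq_nonneg (‖W‖ - ‖K‖), mul_nonneg (mul_nonneg ha0 hw0) hw0,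
        mul_nonneg hp0 hp0, mul_nonneg htrM htrM, sq_nonneg (‖S‖ - Matrix.trace M)]
    · have h7 : ‖S‖ ^ 2 ≤ Matrix.trace M := by nlinarith
      have h8 : Matrix.trace M ≤ ‖K‖ ^ 2 := by linarith
      have h9 : ‖K‖ ^ 2 ≤ 4 * ‖W‖ ^ 2 := by nlinarith
      have h10 : ‖A‖ * Matrix.trace M ≤ ‖A‖ * (4 * ‖W‖ ^ 2) :=
        mul_le_mul_of_nonneg_left (le_trans h8 h9) ha0
      linarith [hAS, h10, hWK, sq_nonneg (‖W‖ - ‖K‖), sq_nonneg ‖S‖]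

theorem one_mem_SO3 : (1 : M3) ∈ SO3 := by
  constructor <;> simp [Matrix.transpose_one]

theorem infDist_lower (G : M3) (t : ℝ) (hsmall : ‖t • symPart G‖ ≤ 1 / 8) :
    Real.sqrt (max 0 (‖t • symPart G‖ ^ 2 - 8 * ‖t • symPart G‖ * ‖t • skewPart G‖ ^ 2))
      ≤ Metric.infDist (1 + t • G) SO3 := by
  by_contra hcon
  push_neg at hcon
  obtain ⟨R, hRmem, hlt⟩ := (Metric.infDist_lt_iff ⟨1, one_mem_SO3⟩).mp hcon
  have hk := key G t R hRmem.1 hsmall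
  have h1 : dist (1 + t • G) R = ‖(1 + t • G) - R‖ := dist_eq_norm _ _
  have h2 : Real.sqrt (max 0 (‖t • symPart G‖ ^ 2 -
      8 * ‖t • symPart G‖ * ‖t • skewPart G‖ ^ 2)) ≤ ‖(1 + t • G) - R‖ := by
    rw [show ‖(1 + t • G) - R‖ = Real.sqrt (‖(1 + t • G) - R‖ ^ 2) from
      (Real.sqrt_sq (norm_nonneg _)).symm]
    exact Real.sqrt_le_sqrt (max_le (sq_nonneg _) hk)
  rw [h1] at hlt
  linarith

section Exp

attribute [local instance] Matrix.frobeniusNormedRing Matrix.frobeniusNormedAlgebra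

noncomputable instance : CompleteSpace M3 := FiniteDimensional.complete ℝ _

open NormedSpace

theorem exp_skew_orth (L : M3) (hL : Lᵀ = -L) : (exp L)ᵀ * exp L = 1 := by
  rw [← Matrix.exp_transpose, hL]
  rw [← Matrix.exp_add_of_commute (-L) L (Commute.neg_left (Commute.refl L))]
  simp [exp_zero]

theorem exp_skew_mem (K : M3) (hK : Kᵀ = -K) (t : ℝ) : exp (t • K) ∈ SO3 := by
  have hskew : ∀ u : ℝ, (u • K)ᵀ = -(u • K) := by
    intro u; rw [Matrix.transpose_smul, hK, smul_neg]
  have horth : ∀ u : ℝ, (exp (u • K))ᵀ * exp (u • K) = 1 := fun u =>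
    exp_skew_orth _ (hskew u)
  refine ⟨horth t, ?_⟩
  have hcont : Continuous fun u : ℝ => exp (u • K) := by
    rw [continuous_iff_continuousAt]
    exact fun u => (hasDerivAt_exp_smul_const K u).continuousAt
  have hdetcont : Continuous fun u : ℝ => (exp (u • K)).det := hcont.matrix_det
  have hsq : ∀ u : ℝ, ((exp (u • K)).det) ^ 2 = 1 := by
    intro u
    have h := congrArg Matrix.det (horth u)
    rw [Matrix.det_mul, Matrix.det_transpose, Matrix.det_one] at h
    nlinarith [h]
  have h0 : (exp ((0 : ℝ) • K)).det = 1 := by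
    rw [zero_smul, exp_zero, Matrix.det_one]
  by_contra hne
  have hneg : (exp (t • K)).det ≤ 0 := by
    have hu := hsq t
    have hfac : ((exp (t • K)).det - 1) * ((exp (t • K)).det + 1) = 0 := by nlinarith
    rcases mul_eq_zero.mp hfac with h | h
    · exact absurd (by linarith : (exp (t • K)).det = 1) hne
    · linarith
  obtain ⟨u, _, hu⟩ := intermediate_value_uIcc
    (f := fun u : ℝ => (exp (u • K)).det) (a := 0) (b := t)
    hdetcont.continuousOn
    (show (0:ℝ) ∈ Set.uIcc ((exp ((0:ℝ) • K)).det) ((exp (t • K)).det) by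
      rw [h0]; exact Set.mem_uIcc.mpr (Or.inr ⟨hneg, by norm_num⟩))
  have hu' : (exp (u • K)).det = 0 := hu
  have := hsq u
  rw [hu'] at this
  norm_num at this

theorem exp_remainder (K : M3) :
    Filter.Tendsto (fun t : ℝ => ‖exp (t • K) - 1 - t • K‖ / |t|)
      (nhds 0) (nhds 0) := by
  have hd := hasDerivAt_exp_smul_const (𝕂 := ℝ) K (0 : ℝ)
  simp only [zero_smul, exp_zero, one_mul] at hd
  rw [hasDerivAt_iff_isLittleO] at hd
  have ho : (fun t : ℝ => exp (t • K) - 1 - t • K) =o[nhds 0] (fun t : ℝ => t) := by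
    simp only [zero_smul, exp_zero, sub_zero] at hd; exact hd
  have := (ho.norm_norm).tendsto_div_nhds_zero
  simpa [Real.norm_eq_abs] using this

end Exp

end SO3Aux

/-- for every matrix `G`, `dist(Id + tG, SO(3))/|t| → |sym G|` as `t → 0`,
where `dist` is induced by the Frobenius norm. -/
theorem dist_to_SO3_first_order
    (G : Matrix (Fin 3) (Fin 3) ℝ) :
    Filter.Tendsto (fun t : ℝ => Metric.infDist (1 + t • G) SO3 / |t|)
      (nhdsWithin 0 {0}ᶜ) (nhds ‖symPart G‖) := by
  set b := ‖symPart G‖ with hb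
  set c := ‖SO3Aux.skewPart G‖ with hc
  set K0 := SO3Aux.skewPart G with hK0
  have hb0 : 0 ≤ b := norm_nonneg _
  have hlow : Filter.Tendsto (fun t : ℝ => Real.sqrt (max 0 (b ^ 2 - 8 * b * c ^ 2 * |t|)))
      (nhds 0) (nhds b) := by
    have h1 : Filter.Tendsto (fun t : ℝ => b ^ 2 - 8 * b * c ^ 2 * |t|) (nhds 0)
        (nhds (b ^ 2)) := by
      have hcont : Continuous fun t : ℝ => b ^ 2 - 8 * b * c ^ 2 * |t| := by continuity
      simpa using hcont.tendsto 0
    have hc2 : Continuous fun x : ℝ => Real.sqrt (max 0 x) :=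
      Real.continuous_sqrt.comp (continuous_const.max continuous_id)
    have h2 := (hc2.tendsto (b ^ 2)).comp h1
    simpa [Function.comp_def, max_eq_right (sq_nonneg b), Real.sqrt_sq hb0] using h2
  have hup : Filter.Tendsto
      (fun t : ℝ => b + ‖NormedSpace.exp (t • K0) - 1 - t • K0‖ / |t|)
      (nhds 0) (nhds b) := by
    have := (tendsto_const_nhds (x := b) (f := nhds (0:ℝ))).add (SO3Aux.exp_remainder K0)
    simpa using this
  apply tendsto_of_tendsto_of_tendsto_of_le_of_le' (hlow.mono_left nhdsWithin_le_nhds)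
    (hup.mono_left nhdsWithin_le_nhds)
  · -- lower ≤ f eventually
    have hev : ∀ᶠ t : ℝ in nhdsWithin 0 {0}ᶜ, ‖t • symPart G‖ ≤ 1 / 8 := by
      have htend : Filter.Tendsto (fun t : ℝ => ‖t • symPart G‖) (nhdsWithin 0 {0}ᶜ)
          (nhds 0) := by
        have hcont : Continuous fun t : ℝ => ‖t • symPart G‖ :=
          (continuous_id.smul continuous_const).norm
        have := hcont.tendsto 0
        simp only [zero_smul, norm_zero] at this
        exact this.mono_left nhdsWithin_le_nhds
      exact htend.eventually (eventually_le_nhds (by norm_num))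
    filter_upwards [hev, self_mem_nhdsWithin] with t hts ht
    have ht0 : t ≠ 0 := ht
    have habs : 0 < |t| := abs_pos.mpr ht0
    have hlo := SO3Aux.infDist_lower G t hts
    have hnormA : ‖t • symPart G‖ = |t| * b := by rw [norm_smul, Real.norm_eq_abs, hb]
    have hnormW : ‖t • SO3Aux.skewPart G‖ = |t| * c := by rw [norm_smul, Real.norm_eq_abs, hc]
    have hkey : ‖t • symPart G‖ ^ 2 - 8 * ‖t • symPart G‖ * ‖t • SO3Aux.skewPart G‖ ^ 2
        = |t| ^ 2 * (b ^ 2 - 8 * b * c ^ 2 * |t|) := by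
      rw [hnormA, hnormW]; ring
    rw [hkey] at hlo
    have hmax : max 0 (|t| ^ 2 * (b ^ 2 - 8 * b * c ^ 2 * |t|))
        = |t| ^ 2 * max 0 (b ^ 2 - 8 * b * c ^ 2 * |t|) := by
      rw [mul_max_of_nonneg _ _ (sq_nonneg |t|), mul_zero]
    rw [hmax, Real.sqrt_mul (sq_nonneg _), Real.sqrt_sq (abs_nonneg t)] at hlo
    rw [le_div_iff₀ habs]
    linarith [hlo]
  · -- f ≤ upper eventually
    filter_upwards [self_mem_nhdsWithin] with t ht
    have ht0 : t ≠ 0 := ht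
    have habs : 0 < |t| := abs_pos.mpr ht0
    have hmem := SO3Aux.exp_skew_mem K0 (SO3Aux.skewPart_transpose G) t
    have h1 : Metric.infDist (1 + t • G) SO3 ≤ dist (1 + t • G) (NormedSpace.exp (t • K0)) :=
      Metric.infDist_le_dist_of_mem hmem
    rw [dist_eq_norm] at h1
    have hdecomp : (1 + t • G) - NormedSpace.exp (t • K0)
        = t • symPart G + ((1 + t • K0) - NormedSpace.exp (t • K0)) := by
      have hG : G = symPart G + K0 := (SO3Aux.sym_add_skew G).symm
      conv_lhs => rw [hG, smul_add]
      abel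
    have h2 : ‖(1 + t • G) - NormedSpace.exp (t • K0)‖
        ≤ |t| * b + ‖NormedSpace.exp (t • K0) - 1 - t • K0‖ := by
      rw [hdecomp]
      refine le_trans (norm_add_le _ _) ?_
      have e1 : ‖t • symPart G‖ = |t| * b := by rw [norm_smul, Real.norm_eq_abs, hb]
      have e2 : (1 + t • K0) - NormedSpace.exp (t • K0)
          = -(NormedSpace.exp (t • K0) - 1 - t • K0) := by abel
      rw [e1, e2, norm_neg]
    rw [div_le_iff₀ habs]
    have e3 : (b + ‖NormedSpace.exp (t • K0) - 1 - t • K0‖ / |t|) * |t|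
        = |t| * b + ‖NormedSpace.exp (t • K0) - 1 - t • K0‖ := by
      field_simp
    rw [e3]
    linarith
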